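/- Let C and D be Hopf algebras; let N be a C-bicomodule whose left C-comodule structure is trivial (δ_L^C(x) = 1 ⊗ x); suppose N carries a left D-comodule structure δ_L^D making N a (D, C)-bicomodule (the left D-coaction compatible with the right C-coaction), and give C the trivial left D-comodule structure. Equip each N ⊗ C^{⊗i} with the left D-comodule structure δ_L^D(x ⊗ c¹ ⊗ ⋯ ⊗ cⁱ) = δ_L^D(x) ⊗ c¹ ⊗ ⋯ ⊗ cⁱ. Then each differential dⁱ: N ⊗ C^{⊗i} → N ⊗ C^{⊗(i+1)} of the coHochschild complex is a morphism of left D-comodules, and consequently every coHochschild homology group Hoch^i(C, N) inherits a left D-comodule structure. -/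

import Mathlib

/-!
STATEMENT 3: Let `C`, `D` be Hopf algebras, `N` a `C`-bicomodule with trivial left
`C`-coaction, carrying a left `D`-comodule structure making it a `(D,C)`-bicomodule,
`C` having the trivial left `D`-comodule structure.  Equip each term `N ⊗ C^{⊗ i}`
of the coHochschild complex with the left `D`-comodule structure
`δ_L^D(x ⊗ c¹ ⊗ ⋯ ⊗ cⁱ) = δ_L^D(x) ⊗ c¹ ⊗ ⋯ ⊗ cⁱ`.  Then every differential
`dⁱ : N ⊗ C^{⊗i} → N ⊗ C^{⊗(i+1)}` is a morphism of left `D`-comodules, and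
consequently every coHochschild homology group `Hoch^i(C,N)` inherits a left
`D`-comodule structure.
-/

noncomputable section

open TensorProduct

variable (K C : Type) [CommRing K] [AddCommGroup C] [Module K C]

/-- A bicomodule datum over a coalgebra `C`. -/
structure BicomodData where
  carrier : Type
  [acg : AddCommGroup carrier]
  [mod : Module K carrier]
  coactL : carrier →ₗ[K] C ⊗[K] carrier
  coactR : carrier →ₗ[K] carrier ⊗[K] C

attribute [instance] BicomodData.acg BicomodData.mod

variable {K C} (comul : C →ₗ[K] C ⊗[K] C)

/-- Tensoring a bicomodule with `C` on the right (the coefficient step of the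
coHochschild complex). -/
def BicomodData.step (B : BicomodData K C) : BicomodData K C where
  carrier := B.carrier ⊗[K] C
  coactL := (TensorProduct.assoc K C B.carrier C).toLinearMap ∘ₗ
    (LinearMap.rTensor C B.coactL)
  coactR := (TensorProduct.assoc K B.carrier C C).symm.toLinearMap ∘ₗ
    (LinearMap.lTensor B.carrier comul)

/-- `cochain comul i B` has carrier `B.carrier ⊗ C^{⊗ i}`. -/
def cochain : ℕ → BicomodData K C → BicomodData K C
  | 0, B => B
  | (i+1), B => cochain i (B.step comul)

/-- Functoriality of `cochain` in the coefficient module. -/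
def cochainMap : (i : ℕ) → (B B' : BicomodData K C) → (B.carrier →ₗ[K] B'.carrier) →
    ((cochain comul i B).carrier →ₗ[K] (cochain comul i B').carrier)
  | 0, _, _, f => f
  | (i+1), B, B', f => cochainMap i (B.step comul) (B'.step comul) (LinearMap.rTensor C f)

/-- The coHochschild (Cartier) differential
`δ(x ⊗ c₁ ⊗ ⋯ ⊗ cᵢ) = δ_R(x) ⊗ c₁ ⊗ ⋯ + Σⱼ(−1)ʲ x ⊗ ⋯ ⊗ Δ(cⱼ) ⊗ ⋯ +
(−1)^{i+1} x₍₀₎ ⊗ c₁ ⊗ ⋯ ⊗ cᵢ ⊗ x₍₋₁₎`. -/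
def cobarD : (i : ℕ) → (B : BicomodData K C) →
    ((cochain comul i B).carrier →ₗ[K] (cochain comul (i+1) B).carrier)
  | 0, B => B.coactR - (TensorProduct.comm K C B.carrier).toLinearMap ∘ₗ B.coactL
  | (i+1), B =>
      show (cochain comul i (B.step comul)).carrier →ₗ[K]
          (cochain comul (i+1) (B.step comul)).carrier from
        (show (cochain comul i (B.step comul)).carrier →ₗ[K]
            (cochain comul (i+1) (B.step comul)).carrier from
          cochainMap comul i (B.step comul) ((B.step comul).step comul)
            (LinearMap.rTensor C B.coactR)) - cobarD i (B.step comul)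

variable (D : Type) [AddCommGroup D] [Module K D]

/-- The left `D`-comodule structure on `N ⊗ C^{⊗ i}` induced by a left `D`-coaction
on the coefficients `N` : `x ⊗ c¹ ⊗ ⋯ ⊗ cⁱ ↦ δ(x) ⊗ c¹ ⊗ ⋯ ⊗ cⁱ`. -/
def Dcoact : (i : ℕ) → (B : BicomodData K C) → (B.carrier →ₗ[K] D ⊗[K] B.carrier) →
    ((cochain comul i B).carrier →ₗ[K] D ⊗[K] (cochain comul i B).carrier)
  | 0, _, δ => δ
  | (i+1), B, δ => Dcoact i (B.step comul)
      ((TensorProduct.assoc K D B.carrier C).toLinearMap ∘ₗ LinearMap.rTensor C δ)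

/-- The induced `D`-coaction on `B.step`. -/
def δstep (B : BicomodData K C) (δ : B.carrier →ₗ[K] D ⊗[K] B.carrier) :
    B.carrier ⊗[K] C →ₗ[K] D ⊗[K] (B.carrier ⊗[K] C) :=
  (TensorProduct.assoc K D B.carrier C).toLinearMap ∘ₗ LinearMap.rTensor C δ

lemma δstep_compat {B B' : BicomodData K C} (f : B.carrier →ₗ[K] B'.carrier)
    (δ : B.carrier →ₗ[K] D ⊗[K] B.carrier) (δ' : B'.carrier →ₗ[K] D ⊗[K] B'.carrier)
    (h : LinearMap.lTensor D f ∘ₗ δ = δ' ∘ₗ f) :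
    LinearMap.lTensor D (LinearMap.rTensor C f) ∘ₗ δstep D B δ =
      δstep D B' δ' ∘ₗ LinearMap.rTensor C f := by
  have nat : ∀ (u : D ⊗[K] B.carrier) (c : C),
      LinearMap.lTensor D (LinearMap.rTensor C f)
          ((TensorProduct.assoc K D B.carrier C) (u ⊗ₜ[K] c)) =
        (TensorProduct.assoc K D B'.carrier C) ((LinearMap.lTensor D f u) ⊗ₜ[K] c) := by
    intro u c
    induction u using TensorProduct.induction_on with
    | zero => simp
    | tmul d x => simp
    | add u v hu hv => simp [add_tmul, hu, hv]
  apply TensorProduct.ext'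
  intro x c
  have hx : LinearMap.lTensor D f (δ x) = δ' (f x) := LinearMap.congr_fun h x
  simp only [δstep, LinearMap.coe_comp, Function.comp_apply, LinearMap.rTensor_tmul,
    LinearEquiv.coe_coe]
  rw [nat, hx]

lemma cochainMap_Dcoact (i : ℕ) :
    ∀ (B B' : BicomodData K C) (f : B.carrier →ₗ[K] B'.carrier)
      (δ : B.carrier →ₗ[K] D ⊗[K] B.carrier) (δ' : B'.carrier →ₗ[K] D ⊗[K] B'.carrier),
      LinearMap.lTensor D f ∘ₗ δ = δ' ∘ₗ f →
      LinearMap.lTensor D (cochainMap comul i B B' f) ∘ₗ Dcoact comul D i B δ =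
        Dcoact comul D i B' δ' ∘ₗ cochainMap comul i B B' f := by
  induction i with
  | zero => intro B B' f δ δ' h; exact h
  | succ i ih =>
    intro B B' f δ δ' h
    exact ih (B.step comul) (B'.step comul) (LinearMap.rTensor C f)
      (δstep D B δ) (δstep D B' δ') (δstep_compat D f δ δ' h)

lemma step_coactL (B : BicomodData K C) (e : C)
    (h : B.coactL = TensorProduct.mk K C B.carrier e) :
    (B.step comul).coactL = TensorProduct.mk K C (B.step comul).carrier e := by
  apply TensorProduct.ext'
  intro x c
  simp [BicomodData.step, h]
  show (TensorProduct.assoc K C B.carrier C)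
      (LinearMap.rTensor C (TensorProduct.mk K C B.carrier e) (x ⊗ₜ[K] c)) = e ⊗ₜ[K] (x ⊗ₜ[K] c)
  simp

lemma step_compatR (B : BicomodData K C) (δ : B.carrier →ₗ[K] D ⊗[K] B.carrier) :
    LinearMap.lTensor D (B.step comul).coactR ∘ₗ δstep D B δ =
      δstep D (B.step comul) (δstep D B δ) ∘ₗ (B.step comul).coactR := by
  have raw : (LinearMap.lTensor D ((TensorProduct.assoc K B.carrier C C).symm.toLinearMap ∘ₗ
        LinearMap.lTensor B.carrier comul)) ∘ₗ
        ((TensorProduct.assoc K D B.carrier C).toLinearMap ∘ₗ LinearMap.rTensor C δ) =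
      ((TensorProduct.assoc K D (B.carrier ⊗[K] C) C).toLinearMap ∘ₗ
        LinearMap.rTensor C ((TensorProduct.assoc K D B.carrier C).toLinearMap ∘ₗ
          LinearMap.rTensor C δ)) ∘ₗ
        ((TensorProduct.assoc K B.carrier C C).symm.toLinearMap ∘ₗ
          LinearMap.lTensor B.carrier comul) := by
    have claimL : ∀ (u : D ⊗[K] B.carrier) (c : C),
        (LinearMap.lTensor D ((TensorProduct.assoc K B.carrier C C).symm.toLinearMap ∘ₗ
            LinearMap.lTensor B.carrier comul))
            ((TensorProduct.assoc K D B.carrier C) (u ⊗ₜ[K] c)) =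
          (LinearMap.lTensor D (TensorProduct.assoc K B.carrier C C).symm.toLinearMap)
            ((TensorProduct.assoc K D B.carrier (C ⊗[K] C)) (u ⊗ₜ[K] comul c)) := by
      intro u c
      induction u using TensorProduct.induction_on with
      | zero => simp
      | tmul d y => simp
      | add u v hu hv => simp only [add_tmul, map_add, hu, hv]
    have inner : ∀ (v : D ⊗[K] B.carrier) (c₁ c₂ : C),
        (TensorProduct.assoc K D (B.carrier ⊗[K] C) C)
            (((TensorProduct.assoc K D B.carrier C) (v ⊗ₜ[K] c₁)) ⊗ₜ[K] c₂) =
          (LinearMap.lTensor D (TensorProduct.assoc K B.carrier C C).symm.toLinearMap)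
            ((TensorProduct.assoc K D B.carrier (C ⊗[K] C)) (v ⊗ₜ[K] (c₁ ⊗ₜ[K] c₂))) := by
      intro v c₁ c₂
      induction v using TensorProduct.induction_on with
      | zero => simp
      | tmul d y => simp
      | add v₁ v₂ h₁ h₂ => simp only [add_tmul, map_add, h₁, h₂]
    have claimR : ∀ (x : B.carrier) (w : C ⊗[K] C),
        ((TensorProduct.assoc K D (B.carrier ⊗[K] C) C).toLinearMap ∘ₗ
          LinearMap.rTensor C ((TensorProduct.assoc K D B.carrier C).toLinearMap ∘ₗ
            LinearMap.rTensor C δ))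
            ((TensorProduct.assoc K B.carrier C C).symm (x ⊗ₜ[K] w)) =
          (LinearMap.lTensor D (TensorProduct.assoc K B.carrier C C).symm.toLinearMap)
            ((TensorProduct.assoc K D B.carrier (C ⊗[K] C)) ((δ x) ⊗ₜ[K] w)) := by
      intro x w
      induction w using TensorProduct.induction_on with
      | zero => simp
      | tmul c₁ c₂ =>
        simp only [TensorProduct.assoc_symm_tmul, LinearMap.coe_comp, Function.comp_apply,
          LinearMap.rTensor_tmul, LinearEquiv.coe_coe]
        exact inner (δ x) c₁ c₂
      | add w₁ w₂ h₁ h₂ => simp only [tmul_add, map_add, h₁, h₂]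
    apply TensorProduct.ext'
    intro x c
    simp only [LinearMap.coe_comp, Function.comp_apply, LinearMap.rTensor_tmul,
      LinearEquiv.coe_coe]
    rw [claimL (δ x) c]
    have := claimR x (comul c)
    simp only [LinearMap.coe_comp, Function.comp_apply, LinearEquiv.coe_coe] at this
    rw [← this]
    have lt : (LinearMap.lTensor B.carrier comul) (x ⊗ₜ[K] c) = x ⊗ₜ[K] comul c := by simp
    rw [lt]
  exact raw

lemma coactL_compat (B : BicomodData K C) (e : C) (δ : B.carrier →ₗ[K] D ⊗[K] B.carrier) :
    LinearMap.lTensor D ((TensorProduct.comm K C B.carrier).toLinearMap ∘ₗ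
        TensorProduct.mk K C B.carrier e) ∘ₗ δ =
      δstep D B δ ∘ₗ ((TensorProduct.comm K C B.carrier).toLinearMap ∘ₗ
        TensorProduct.mk K C B.carrier e) := by
  have key : ∀ u : D ⊗[K] B.carrier,
      LinearMap.lTensor D ((TensorProduct.comm K C B.carrier).toLinearMap ∘ₗ
          TensorProduct.mk K C B.carrier e) u =
        (TensorProduct.assoc K D B.carrier C) (u ⊗ₜ[K] e) := by
    intro u
    induction u using TensorProduct.induction_on with
    | zero => simp
    | tmul d y => simp
    | add u v hu hv => simp [add_tmul, hu, hv]
  apply LinearMap.ext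
  intro x
  simp [δstep, key]

lemma cobarD_comodule_hom (i : ℕ) :
    ∀ (B : BicomodData K C) (e : C) (δ : B.carrier →ₗ[K] D ⊗[K] B.carrier),
      B.coactL = TensorProduct.mk K C B.carrier e →
      LinearMap.lTensor D B.coactR ∘ₗ δ = δstep D B δ ∘ₗ B.coactR →
      LinearMap.lTensor D (cobarD comul i B) ∘ₗ Dcoact comul D i B δ =
        Dcoact comul D (i+1) B δ ∘ₗ cobarD comul i B := by
  induction i with
  | zero =>
    intro B e δ ht hc
    show LinearMap.lTensor D (B.coactR -
        (TensorProduct.comm K C B.carrier).toLinearMap ∘ₗ B.coactL) ∘ₗ δ =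
      δstep D B δ ∘ₗ (B.coactR -
        (TensorProduct.comm K C B.carrier).toLinearMap ∘ₗ B.coactL)
    rw [LinearMap.lTensor_sub, LinearMap.sub_comp, LinearMap.comp_sub, hc, ht,
      coactL_compat D B e δ]
  | succ i ih =>
    intro B e δ ht hc
    have h1 := ih (B.step comul) e (δstep D B δ) (step_coactL comul B e ht)
      (step_compatR comul D B δ)
    have h2 := cochainMap_Dcoact comul D i (B.step comul) ((B.step comul).step comul)
      (LinearMap.rTensor C B.coactR) (δstep D B δ)
      (δstep D (B.step comul) (δstep D B δ))
      (δstep_compat D (B := B) (B' := B.step comul) B.coactR δ (δstep D B δ) hc)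
    simp only [cobarD, Dcoact, δstep] at h1 h2 ⊢
    erw [LinearMap.lTensor_sub, LinearMap.sub_comp, LinearMap.comp_sub, h1, h2]
    rfl

set_option maxHeartbeats 1600000 in
theorem cobar_differentials_are_D_comodule_morphisms
    {K C D : Type} [Field K] [CharZero K] [Ring C] [HopfAlgebra K C]
    [Ring D] [HopfAlgebra K D]
    (B : BicomodData K C)
    -- the left `C`-comodule structure of `N` is trivial
    (htriv : B.coactL = (TensorProduct.mk K C B.carrier) 1)
    -- `N` is a right `C`-comodule
    (hcounit : (TensorProduct.rid K B.carrier).toLinearMap ∘ₗ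
        (LinearMap.lTensor B.carrier (Coalgebra.counit (R := K) (A := C))) ∘ₗ B.coactR =
      LinearMap.id)
    (hcoassoc : (LinearMap.lTensor B.carrier (Coalgebra.comul (R := K) (A := C))) ∘ₗ B.coactR =
      (TensorProduct.assoc K B.carrier C C).toLinearMap ∘ₗ
        (LinearMap.rTensor C B.coactR) ∘ₗ B.coactR)
    -- `N` is a left `D`-comodule via `δD`
    (δD : B.carrier →ₗ[K] D ⊗[K] B.carrier)
    (hDcounit : (TensorProduct.lid K B.carrier).toLinearMap ∘ₗ
        (LinearMap.rTensor B.carrier (Coalgebra.counit (R := K) (A := D))) ∘ₗ δD =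
      LinearMap.id)
    (hDcoassoc : (LinearMap.rTensor B.carrier (Coalgebra.comul (R := K) (A := D))) ∘ₗ δD =
      (TensorProduct.assoc K D D B.carrier).symm.toLinearMap ∘ₗ
        (LinearMap.lTensor D δD) ∘ₗ δD)
    -- `N` is a `(D,C)`-bicomodule: the two coactions commute
    (hcompat : (LinearMap.lTensor D B.coactR) ∘ₗ δD =
      (TensorProduct.assoc K D B.carrier C).toLinearMap ∘ₗ
        (LinearMap.rTensor C δD) ∘ₗ B.coactR) :
    -- (1) every differential of the coHochschild complex is a `D`-comodule morphism
    (∀ i : ℕ,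
      (LinearMap.lTensor D (cobarD (Coalgebra.comul (R := K) (A := C)) i B)) ∘ₗ
          Dcoact (Coalgebra.comul (R := K) (A := C)) D i B δD =
        Dcoact (Coalgebra.comul (R := K) (A := C)) D (i+1) B δD ∘ₗ
          cobarD (Coalgebra.comul (R := K) (A := C)) i B) ∧
    -- (2) consequently the cocycles form a `D`-subcomodule ...
    (∀ i : ℕ,
      ∃ ρker : LinearMap.ker (cobarD (Coalgebra.comul (R := K) (A := C)) i B) →ₗ[K]
          D ⊗[K] LinearMap.ker (cobarD (Coalgebra.comul (R := K) (A := C)) i B),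
        (LinearMap.lTensor D
            (LinearMap.ker (cobarD (Coalgebra.comul (R := K) (A := C)) i B)).subtype) ∘ₗ ρker =
          Dcoact (Coalgebra.comul (R := K) (A := C)) D i B δD ∘ₗ
            (LinearMap.ker (cobarD (Coalgebra.comul (R := K) (A := C)) i B)).subtype) ∧
    -- ... and each coHochschild homology group `Hoch^{i+1}(C,N)` (cocycles modulo
    -- coboundaries; `Hoch^0` is the kernel treated in (2)) inherits a `D`-comodule
    -- structure from the one on cocycles
    (∀ (i : ℕ)
      (ρker : LinearMap.ker (cobarD (Coalgebra.comul (R := K) (A := C)) (i+1) B) →ₗ[K]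
          D ⊗[K] LinearMap.ker (cobarD (Coalgebra.comul (R := K) (A := C)) (i+1) B)),
      ((LinearMap.lTensor D
            (LinearMap.ker (cobarD (Coalgebra.comul (R := K) (A := C)) (i+1) B)).subtype) ∘ₗ
          ρker =
        Dcoact (Coalgebra.comul (R := K) (A := C)) D (i+1) B δD ∘ₗ
          (LinearMap.ker (cobarD (Coalgebra.comul (R := K) (A := C)) (i+1) B)).subtype) →
      ∃ ρ : (LinearMap.ker (cobarD (Coalgebra.comul (R := K) (A := C)) (i+1) B) ⧸
              (Submodule.comap
                (LinearMap.ker (cobarD (Coalgebra.comul (R := K) (A := C)) (i+1) B)).subtype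
                (LinearMap.range (cobarD (Coalgebra.comul (R := K) (A := C)) i B)))) →ₗ[K]
            D ⊗[K] (LinearMap.ker (cobarD (Coalgebra.comul (R := K) (A := C)) (i+1) B) ⧸
              (Submodule.comap
                (LinearMap.ker (cobarD (Coalgebra.comul (R := K) (A := C)) (i+1) B)).subtype
                (LinearMap.range (cobarD (Coalgebra.comul (R := K) (A := C)) i B)))),
        ρ ∘ₗ (Submodule.comap
                (LinearMap.ker (cobarD (Coalgebra.comul (R := K) (A := C)) (i+1) B)).subtype
                (LinearMap.range (cobarD (Coalgebra.comul (R := K) (A := C)) i B))).mkQ =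
          (LinearMap.lTensor D
            (Submodule.comap
                (LinearMap.ker (cobarD (Coalgebra.comul (R := K) (A := C)) (i+1) B)).subtype
                (LinearMap.range (cobarD (Coalgebra.comul (R := K) (A := C)) i B))).mkQ) ∘ₗ
            ρker) := by
  set cm : C →ₗ[K] C ⊗[K] C := Coalgebra.comul (R := K) (A := C) with hcm
  have hc : LinearMap.lTensor D B.coactR ∘ₗ δD = δstep D B δD ∘ₗ B.coactR := by
    rw [hcompat]; rfl
  have part1 : ∀ i : ℕ,
      (LinearMap.lTensor D (cobarD cm i B)) ∘ₗ Dcoact cm D i B δD =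
        Dcoact cm D (i+1) B δD ∘ₗ cobarD cm i B :=
    fun i => cobarD_comodule_hom cm D i B 1 δD htriv hc
  refine ⟨part1, ?_, ?_⟩
  · -- part (2): the cocycles carry an induced coaction
    intro i
    have hinj : Function.Injective
        (LinearMap.lTensor D (LinearMap.ker (cobarD cm i B)).subtype) :=
      Module.Flat.lTensor_preserves_injective_linearMap _ (Submodule.injective_subtype _)
    have hex := Module.Flat.lTensor_exact D
      (LinearMap.exact_subtype_ker_map (cobarD cm i B))
    have hmem : ∀ x : LinearMap.ker (cobarD cm i B),
        Dcoact cm D i B δD x.1 ∈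
          LinearMap.range (LinearMap.lTensor D (LinearMap.ker (cobarD cm i B)).subtype) := by
      intro x
      have h0 : LinearMap.lTensor D (cobarD cm i B) (Dcoact cm D i B δD x.1) = 0 := by
        have h := LinearMap.congr_fun (part1 i) x.1
        simp only [LinearMap.coe_comp, Function.comp_apply] at h
        rw [h, LinearMap.mem_ker.mp x.2, map_zero]
      obtain ⟨y, hy⟩ := (hex _).mp h0
      exact ⟨y, hy⟩
    obtain ⟨g, hg⟩ := LinearMap.exists_leftInverse_of_injective
      (LinearMap.lTensor D (LinearMap.ker (cobarD cm i B)).subtype)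
      (LinearMap.ker_eq_bot.mpr hinj)
    refine ⟨g ∘ₗ (Dcoact cm D i B δD ∘ₗ (LinearMap.ker (cobarD cm i B)).subtype), ?_⟩
    apply LinearMap.ext
    intro x
    obtain ⟨u, hu⟩ := hmem x
    have hgu : g ((LinearMap.lTensor D (LinearMap.ker (cobarD cm i B)).subtype) u) = u := by
      simpa using LinearMap.congr_fun hg u
    simp only [LinearMap.coe_comp, Function.comp_apply, Submodule.coe_subtype]
    rw [← hu, hgu]
  · -- part (3): the coaction descends to the quotient by the coboundaries
    intro i ρker hρ
    set S : Submodule K (LinearMap.ker (cobarD cm (i+1) B)) :=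
      Submodule.comap (LinearMap.ker (cobarD cm (i+1) B)).subtype
        (LinearMap.range (cobarD cm i B)) with hS
    -- the induced injection of `ker/S` into `M/(range d_i)`
    have hle : ∀ x ∈ S, ((LinearMap.range (cobarD cm i B)).mkQ ∘ₗ
        (LinearMap.ker (cobarD cm (i+1) B)).subtype) x = 0 := by
      intro x hx
      simp only [LinearMap.coe_comp, Function.comp_apply, Submodule.mkQ_apply,
        Submodule.Quotient.mk_eq_zero]
      exact hx
    set j := S.liftQ ((LinearMap.range (cobarD cm i B)).mkQ ∘ₗ
        (LinearMap.ker (cobarD cm (i+1) B)).subtype) hle with hj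
    have hjinj : Function.Injective j := by
      rw [← LinearMap.ker_eq_bot]
      apply Submodule.ker_liftQ_eq_bot
      intro x hx
      simp only [LinearMap.mem_ker, LinearMap.coe_comp, Function.comp_apply,
        Submodule.mkQ_apply, Submodule.Quotient.mk_eq_zero] at hx
      exact hx
    have hcond : S ≤ LinearMap.ker (LinearMap.lTensor D S.mkQ ∘ₗ ρker) := by
      intro s hs
      rw [LinearMap.mem_ker]
      apply Module.Flat.lTensor_preserves_injective_linearMap j hjinj
      rw [map_zero]
      obtain ⟨w, hw⟩ := hs
      have step1 : LinearMap.lTensor D j ((LinearMap.lTensor D S.mkQ ∘ₗ ρker) s) =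
          LinearMap.lTensor D (j ∘ₗ S.mkQ) (ρker s) := by
        simp only [LinearMap.coe_comp, Function.comp_apply, LinearMap.lTensor_comp,
          LinearMap.coe_comp]
      have step2 : j ∘ₗ S.mkQ = (LinearMap.range (cobarD cm i B)).mkQ ∘ₗ
          (LinearMap.ker (cobarD cm (i+1) B)).subtype := S.liftQ_mkQ _ _
      have step3 : LinearMap.lTensor D ((LinearMap.ker (cobarD cm (i+1) B)).subtype)
          (ρker s) = Dcoact cm D (i+1) B δD ((LinearMap.ker (cobarD cm (i+1) B)).subtype s) :=
        LinearMap.congr_fun hρ s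
      have step4 : Dcoact cm D (i+1) B δD ((LinearMap.ker (cobarD cm (i+1) B)).subtype s) =
          LinearMap.lTensor D (cobarD cm i B) (Dcoact cm D i B δD w) := by
        rw [← hw]
        exact (LinearMap.congr_fun (part1 i) w).symm
      rw [step1, step2, LinearMap.lTensor_comp, LinearMap.comp_apply, step3, step4,
        ← LinearMap.lTensor_comp_apply, LinearMap.range_mkQ_comp, LinearMap.lTensor_zero,
        LinearMap.zero_apply]
    refine ⟨S.liftQ (LinearMap.lTensor D S.mkQ ∘ₗ ρker) hcond, S.liftQ_mkQ _ _⟩
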